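/- Let $T : X \to Y$ be a bounded linear operator between Banach spaces and let $0 < \delta < \operatorname{uc}(T)$. Then there exist a closed subspace $X_0 \subset X$ and surjective isomorphisms $U : c_0 \to X_0$, $V : T(X_0) \to c_0$ with $(T|_{X_0})^{-1} = U \circ V$, $\|U\| \le 1$, and $\|V\| \le 2/\delta$. -/

import Mathlib

open Filter Topology ZeroAtInfty Metric

noncomputable section

variable (𝕜 : Type*) [RCLike 𝕜]

/-- Measure of non-cauchyness of a sequence. -/
noncomputable def caQ {Y : Type*} [NormedAddCommGroup Y] (y : ℕ → Y) : ℝ :=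
  ⨅ n : ℕ, sSup { r : ℝ | ∃ k ≥ n, ∃ l ≥ n, r = ‖y k - y l‖ }

/-- Weakly unconditionally Cauchy series. -/
def WUC {X : Type*} [NormedAddCommGroup X] [NormedSpace 𝕜 X] (x : ℕ → X) : Prop :=
  ∀ f : StrongDual 𝕜 X, Summable fun n => ‖f (x n)‖

/-- wuC with `sup_{f ∈ B_{X*}} ∑ ‖f(x_n)‖ ≤ 1`. -/
def UnitWUC {X : Type*} [NormedAddCommGroup X] [NormedSpace 𝕜 X] (x : ℕ → X) : Prop :=
  ∀ f : StrongDual 𝕜 X, ‖f‖ ≤ 1 → ∀ N : ℕ, ∑ i ∈ Finset.range N, ‖f (x i)‖ ≤ 1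

/-- The quantity uc(T). -/
noncomputable def ucQ {X Y : Type*} [NormedAddCommGroup X] [NormedSpace 𝕜 X]
    [NormedAddCommGroup Y] [NormedSpace 𝕜 Y] (T : X →L[𝕜] Y) : ℝ :=
  sSup { c | ∃ x : ℕ → X, UnitWUC 𝕜 x ∧
    c = caQ (fun n => ∑ i ∈ Finset.range n, T (x i)) }

/-- Unconditionally converging operator. -/
def UncondConv {X Y : Type*} [NormedAddCommGroup X] [NormedSpace 𝕜 X]
    [NormedAddCommGroup Y] [NormedSpace 𝕜 Y] (T : X →L[𝕜] Y) : Prop :=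
  ∀ x : ℕ → X, WUC 𝕜 x → ∀ t : ℕ → 𝕜, (∃ M : ℝ, ∀ n, ‖t n‖ ≤ M) →
    ∃ y, Tendsto (fun N => ∑ i ∈ Finset.range N, t i • T (x i)) atTop (𝓝 y)

/-- The set T*(B_{Y*}) ⊆ X*. -/
def dualBallImage {X Y : Type*} [NormedAddCommGroup X] [NormedSpace 𝕜 X]
    [NormedAddCommGroup Y] [NormedSpace 𝕜 Y] (T : X →L[𝕜] Y) :
    Set (StrongDual 𝕜 X) :=
  { g | ∃ f : StrongDual 𝕜 Y, ‖f‖ ≤ 1 ∧ g = f.comp T }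

/-- The double-limit (Grothendieck) measure of weak non-compactness γ. -/
noncomputable def gammaM {Z : Type*} [NormedAddCommGroup Z] [NormedSpace 𝕜 Z] (A : Set Z) : ℝ :=
  sSup { c | ∃ (a : ℕ → Z) (f : ℕ → StrongDual 𝕜 Z) (g h : ℕ → 𝕜) (l₁ l₂ : 𝕜),
    (∀ n, a n ∈ A) ∧ (∀ m, ‖f m‖ ≤ 1) ∧
    (∀ n, Tendsto (fun m => f m (a n)) atTop (𝓝 (g n))) ∧ Tendsto g atTop (𝓝 l₁) ∧
    (∀ m, Tendsto (fun n => f m (a n)) atTop (𝓝 (h m))) ∧ Tendsto h atTop (𝓝 l₂) ∧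
    c = ‖l₁ - l₂‖ }

/-- A set is weakly compact: compact in the weak topology, i.e. its image under the
canonical map into `(Dual Z) → 𝕜` (with the product topology) is compact. -/
def WeaklyCompactSet {Z : Type*} [NormedAddCommGroup Z] [NormedSpace 𝕜 Z] (K : Set Z) : Prop :=
  IsCompact ((fun z => fun f : StrongDual 𝕜 Z => f z) '' K)

/-- Relatively weakly compact: contained in a weakly compact set. -/
def RelWeaklyCompact {Z : Type*} [NormedAddCommGroup Z] [NormedSpace 𝕜 Z] (A : Set Z) : Prop :=
  ∃ K : Set Z, WeaklyCompactSet 𝕜 K ∧ A ⊆ K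

/-- The de Blasi measure of weak non-compactness ω. -/
noncomputable def deBlasi {Z : Type*} [NormedAddCommGroup Z] [NormedSpace 𝕜 Z] (A : Set Z) : ℝ :=
  sInf { c | 0 ≤ c ∧ ∃ K : Set Z, K.Nonempty ∧ WeaklyCompactSet 𝕜 K ∧
    ∀ a ∈ A, Metric.infDist a K ≤ c }

/-- The quantity η(K) for bounded K ⊆ X*. -/
noncomputable def etaM {X : Type*} [NormedAddCommGroup X] [NormedSpace 𝕜 X]
    (K : Set (StrongDual 𝕜 X)) : ℝ :=
  sSup { c | ∃ x : ℕ → X, UnitWUC 𝕜 x ∧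
    c = Filter.limsup (fun n => sSup { r : ℝ | ∃ f ∈ K, r = ‖f (x n)‖ }) atTop }

/-- Right-Cauchy sequence: Cauchy for uniform convergence on weakly compact subsets of X*. -/
def RightCauchy {X : Type*} [NormedAddCommGroup X] [NormedSpace 𝕜 X] (x : ℕ → X) : Prop :=
  ∀ K : Set (StrongDual 𝕜 X), WeaklyCompactSet 𝕜 K →
    ∀ ε > (0:ℝ), ∃ N, ∀ k ≥ N, ∀ l ≥ N, ∀ f ∈ K, ‖f (x k) - f (x l)‖ ≤ ε

/-- Weakly Cauchy sequence. -/
def WeakCauchySeq {X : Type*} [NormedAddCommGroup X] [NormedSpace 𝕜 X] (x : ℕ → X) : Prop :=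
  ∀ f : StrongDual 𝕜 X, ∃ l : 𝕜, Tendsto (fun n => f (x n)) atTop (𝓝 l)

/-- Distance from an element of the bidual to (the canonical copy of) Y. -/
noncomputable def distToSpace {Y : Type*} [NormedAddCommGroup Y] [NormedSpace 𝕜 Y]
    (φ : StrongDual 𝕜 (StrongDual 𝕜 Y)) : ℝ :=
  Metric.infDist φ (Set.range (NormedSpace.inclusionInDoubleDual 𝕜 Y))

variable {X Y : Type*} [NormedAddCommGroup X] [NormedSpace 𝕜 X]
  [NormedAddCommGroup Y] [NormedSpace 𝕜 Y]

/-- Rcc(T). -/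
noncomputable def RccQ (T : X →L[𝕜] Y) : ℝ :=
  sSup { c | ∃ (x : ℕ → X) (φ : StrongDual 𝕜 (StrongDual 𝕜 Y)),
    (∀ n, ‖x n‖ ≤ 1) ∧ RightCauchy 𝕜 x ∧
    (∀ f : StrongDual 𝕜 Y, Tendsto (fun n => f (T (x n))) atTop (𝓝 (φ f))) ∧
    c = distToSpace 𝕜 φ }

/-- wcc(T). -/
noncomputable def wccQ (T : X →L[𝕜] Y) : ℝ :=
  sSup { c | ∃ (x : ℕ → X) (φ : StrongDual 𝕜 (StrongDual 𝕜 Y)),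
    (∀ n, ‖x n‖ ≤ 1) ∧ WeakCauchySeq 𝕜 x ∧
    (∀ f : StrongDual 𝕜 Y, Tendsto (fun n => f (T (x n))) atTop (𝓝 (φ f))) ∧
    c = distToSpace 𝕜 φ }

/-- Rcc_ω(T). -/
noncomputable def RccOmega (T : X →L[𝕜] Y) : ℝ :=
  sSup { c | ∃ x : ℕ → X, (∀ n, ‖x n‖ ≤ 1) ∧ RightCauchy 𝕜 x ∧
    c = deBlasi 𝕜 (Set.range fun n => T (x n)) }

/-- wcc_ω(T). -/
noncomputable def wccOmega (T : X →L[𝕜] Y) : ℝ :=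
  sSup { c | ∃ x : ℕ → X, (∀ n, ‖x n‖ ≤ 1) ∧ WeakCauchySeq 𝕜 x ∧
    c = deBlasi 𝕜 (Set.range fun n => T (x n)) }

/-- cc_ρ(T). -/
noncomputable def ccRho (T : X →L[𝕜] Y) : ℝ :=
  sSup { c | ∃ x : ℕ → X, (∀ n, ‖x n‖ ≤ 1) ∧ RightCauchy 𝕜 x ∧
    c = caQ (fun n => T (x n)) }

/-- cc(T). -/
noncomputable def ccQ (T : X →L[𝕜] Y) : ℝ :=
  sSup { c | ∃ x : ℕ → X, (∀ n, ‖x n‖ ≤ 1) ∧ WeakCauchySeq 𝕜 x ∧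
    c = caQ (fun n => T (x n)) }

/-- fix_{c₀}(T) (real scalars). -/
noncomputable def fixc0 {X Y : Type*} [NormedAddCommGroup X] [NormedSpace ℝ X]
    [NormedAddCommGroup Y] [NormedSpace ℝ Y] (T : X →L[ℝ] Y) : ℝ :=
  sSup (insert (0:ℝ) { c | ∃ (X₀ : Submodule ℝ X) (U : C₀(ℕ, ℝ) ≃L[ℝ] X₀)
      (V : (X₀.map (T : X →ₗ[ℝ] Y)) ≃L[ℝ] C₀(ℕ, ℝ)),
    (∀ x : X₀, (U (V ⟨T x, Submodule.mem_map_of_mem x.2⟩) : X) = (x : X)) ∧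
    c = (‖(U : C₀(ℕ, ℝ) →L[ℝ] X₀)‖ *
        ‖(V : (X₀.map (T : X →ₗ[ℝ] Y)) →L[ℝ] C₀(ℕ, ℝ))‖)⁻¹ })

end


/-! ### Auxiliary material for statement5 -/

set_option maxHeartbeats 1000000

section Aux5

open ZeroAtInfty Filter Topology Metric

section Gen
variable {X : Type*} [NormedAddCommGroup X] [NormedSpace ℝ X]

lemma aux5_abs_le_norm (t : C₀(ℕ, ℝ)) (i : ℕ) : |t i| ≤ ‖t‖ := by
  rw [← Real.norm_eq_abs, ← ZeroAtInftyContinuousMap.norm_toBCF_eq_norm]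
  exact BoundedContinuousFunction.norm_coe_le_norm t.toBCF i

/-- Norm bound for finite combinations of a "unit wuC" family. -/
lemma aux5_norm_sum_le (w : ℕ → X)
    (hw : ∀ g : X →L[ℝ] ℝ, ∀ F : Finset ℕ, ∑ j ∈ F, |g (w j)| ≤ ‖g‖)
    (c : ℕ → ℝ) (B : ℝ) (hB : 0 ≤ B) (F : Finset ℕ) (hc : ∀ i ∈ F, |c i| ≤ B) :
    ‖∑ i ∈ F, c i • w i‖ ≤ B := by
  obtain ⟨g, hg1, hg2⟩ := exists_dual_vector'' ℝ (∑ i ∈ F, c i • w i)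
  have : ‖∑ i ∈ F, c i • w i‖ = g (∑ i ∈ F, c i • w i) := by simpa using hg2.symm
  rw [this, map_sum]
  calc ∑ i ∈ F, g (c i • w i) ≤ ∑ i ∈ F, |c i| * |g (w i)| := by
        apply Finset.sum_le_sum
        intro i hi
        rw [map_smul]
        calc c i • g (w i) ≤ |c i * g (w i)| := le_abs_self _
          _ = |c i| * |g (w i)| := abs_mul _ _
    _ ≤ ∑ i ∈ F, B * |g (w i)| := by
        apply Finset.sum_le_sum; intro i hi
        exact mul_le_mul_of_nonneg_right (hc i hi) (abs_nonneg _)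
    _ = B * ∑ i ∈ F, |g (w i)| := by rw [Finset.mul_sum]
    _ ≤ B * ‖g‖ := mul_le_mul_of_nonneg_left (hw g F) hB
    _ ≤ B * 1 := mul_le_mul_of_nonneg_left hg1 hB
    _ = B := mul_one B

/-- Summability of `∑ t i • w i` for `t ∈ c₀`. -/
lemma aux5_summable (w : ℕ → X) [CompleteSpace X]
    (hw : ∀ g : X →L[ℝ] ℝ, ∀ F : Finset ℕ, ∑ j ∈ F, |g (w j)| ≤ ‖g‖)
    (t : C₀(ℕ, ℝ)) : Summable fun i => t i • w i := by
  rw [summable_iff_vanishing]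
  intro s hs
  obtain ⟨ε, hε, hball⟩ := Metric.mem_nhds_iff.1 hs
  have ht : Tendsto (fun n => t n) atTop (𝓝 0) := by
    have := zero_at_infty t
    rwa [Filter.cocompact_eq_cofinite, Nat.cofinite_eq_atTop] at this
  obtain ⟨N, hN⟩ := (Metric.tendsto_atTop.1 ht) (ε/2) (by linarith)
  refine ⟨Finset.range N, fun F hF => ?_⟩
  apply hball
  simp only [Metric.mem_ball, dist_zero_right]
  have : ‖∑ i ∈ F, t i • w i‖ ≤ ε/2 := by
    apply aux5_norm_sum_le w hw _ _ (by linarith)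
    intro i hi
    have hiN : N ≤ i := by
      by_contra hlt
      exact (Finset.disjoint_right.1 hF (Finset.mem_range.2 (not_le.1 hlt))) hi
    have := hN i hiN
    rw [dist_zero_right, Real.norm_eq_abs] at this; exact this.le
  linarith

lemma aux5_tsum_norm_le (w : ℕ → X) [CompleteSpace X]
    (hw : ∀ g : X →L[ℝ] ℝ, ∀ F : Finset ℕ, ∑ j ∈ F, |g (w j)| ≤ ‖g‖)
    (t : C₀(ℕ, ℝ)) : ‖∑' i, t i • w i‖ ≤ ‖t‖ := by
  have hhs : HasSum (fun i => t i • w i) (∑' i, t i • w i) := (aux5_summable w hw t).hasSum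
  refine le_of_tendsto' hhs.norm fun F => ?_
  exact aux5_norm_sum_le w hw _ ‖t‖ (norm_nonneg t) F (fun i _ => aux5_abs_le_norm t i)

/-- `sup` of a `c₀` function is attained. -/
lemma aux5_exists_norm_eq (t : C₀(ℕ, ℝ)) : ∃ m, |t m| = ‖t‖ := by
  by_cases h0 : ‖t‖ = 0
  · refine ⟨0, ?_⟩
    have : t = 0 := by rwa [norm_eq_zero] at h0
    simp [this, h0]
  · have hpos : 0 < ‖t‖ := lt_of_le_of_ne (norm_nonneg t) (Ne.symm h0)
    have ht : Tendsto (fun n => t n) atTop (𝓝 0) := by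
      have := zero_at_infty t
      rwa [Filter.cocompact_eq_cofinite, Nat.cofinite_eq_atTop] at this
    obtain ⟨N, hN⟩ := (Metric.tendsto_atTop.1 ht) (‖t‖/2) (by linarith)
    obtain ⟨m, hm, hmax⟩ := Finset.exists_max_image (Finset.range (N+1)) (fun n => |t n|)
      ⟨0, Finset.mem_range.2 (Nat.succ_pos N)⟩
    refine ⟨m, le_antisymm (aux5_abs_le_norm t m) ?_⟩
    by_contra hlt
    push_neg at hlt
    have hb : ∀ n, ‖t n‖ ≤ max (|t m|) (‖t‖/2) := by
      intro n
      rcases le_or_gt n N with h | h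
      · exact le_max_of_le_left (hmax n (Finset.mem_range.2 (Nat.lt_succ_of_le h)))
      · have := hN n h.le
        rw [dist_zero_right] at this
        exact le_max_of_le_right this.le
    have : ‖t‖ ≤ max (|t m|) (‖t‖/2) := by
      rw [← ZeroAtInftyContinuousMap.norm_toBCF_eq_norm]
      exact BoundedContinuousFunction.norm_le_of_nonempty.2 hb
    rcases max_cases (|t m|) (‖t‖/2) with ⟨heq, _⟩ | ⟨heq, _⟩ <;> rw [heq] at this <;> linarith

end Gen

section ExtractBlocks
variable {X Y : Type*} [NormedAddCommGroup X] [NormedSpace ℝ X]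
  [NormedAddCommGroup Y] [NormedSpace ℝ Y]

lemma aux5_extract_blocks (T : X →L[ℝ] Y) (δ'' : ℝ) (h0 : 0 < δ'') (h : δ'' < ucQ ℝ T) :
    ∃ x : ℕ → X, UnitWUC ℝ x ∧ ∀ n : ℕ, ∃ k l : ℕ, n ≤ l ∧ l < k ∧
      δ'' < ‖(∑ i ∈ Finset.range k, T (x i)) - (∑ i ∈ Finset.range l, T (x i))‖ := by
  have h1 : ∃ c ∈ { c | ∃ x : ℕ → X, UnitWUC ℝ x ∧
      c = caQ (fun n => ∑ i ∈ Finset.range n, T (x i)) }, δ'' < c := by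
    by_contra hcon
    push_neg at hcon
    have : ucQ ℝ T ≤ δ'' := Real.sSup_le hcon h0.le
    linarith
  obtain ⟨c, ⟨x, hx, hc⟩, hcδ⟩ := h1
  refine ⟨x, hx, fun n => ?_⟩
  set S : ℕ → Y := fun n => ∑ i ∈ Finset.range n, T (x i) with hS
  set g : ℕ → ℝ := fun n => sSup { r : ℝ | ∃ k ≥ n, ∃ l ≥ n, r = ‖S k - S l‖ } with hg
  have hg0 : ∀ m, 0 ≤ g m := by
    intro m
    apply Real.sSup_nonneg
    rintro r ⟨k, _, l, _, rfl⟩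
    exact norm_nonneg _
  have hbdd : BddBelow (Set.range g) := ⟨0, by rintro r ⟨m, rfl⟩; exact hg0 m⟩
  have hca : caQ S = ⨅ n, g n := rfl
  have h2 : δ'' < g n := by
    have h3 : caQ S ≤ g n := by rw [hca]; exact ciInf_le hbdd n
    have hcca : δ'' < caQ S := by rw [← hc]; exact hcδ
    linarith
  have h3 : ∃ r ∈ { r : ℝ | ∃ k ≥ n, ∃ l ≥ n, r = ‖S k - S l‖ }, δ'' < r := by
    by_contra hcon
    push_neg at hcon
    have : g n ≤ δ'' := Real.sSup_le hcon h0.le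
    linarith
  obtain ⟨r, ⟨k, hk, l, hl, rfl⟩, hr⟩ := h3
  have hne : k ≠ l := by
    rintro rfl
    simp at hr; linarith
  rcases hne.lt_or_gt with hlt | hlt
  · exact ⟨l, k, hk, hlt, by rwa [norm_sub_rev] at hr⟩
  · exact ⟨k, l, hl, hlt, hr⟩

lemma aux5_blocks_exist (T : X →L[ℝ] Y) (δ'' : ℝ) (x : ℕ → X) (hx : UnitWUC ℝ x)
    (hb : ∀ n : ℕ, ∃ k l : ℕ, n ≤ l ∧ l < k ∧
      δ'' < ‖(∑ i ∈ Finset.range k, T (x i)) - (∑ i ∈ Finset.range l, T (x i))‖) :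
    ∃ u : ℕ → X, (∀ j, δ'' < ‖T (u j)‖) ∧
      (∀ g : X →L[ℝ] ℝ, ∀ F : Finset ℕ, ∑ j ∈ F, |g (u j)| ≤ ‖g‖) := by
  choose K L h1 h2 h3 using hb
  set e : ℕ → ℕ := fun j => Nat.rec 0 (fun _ p => K p) j with he
  have heS : ∀ j, e (j+1) = K (e j) := fun j => rfl
  have hLK : ∀ j, e j ≤ L (e j) := fun j => h1 (e j)
  have hLltK : ∀ j, L (e j) < K (e j) := fun j => h2 (e j)
  have hemono : ∀ j, e j < e (j+1) := by
    intro j; rw [heS]; exact lt_of_le_of_lt (hLK j) (hLltK j)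
  have hemono' : StrictMono e := strictMono_nat_of_lt_succ hemono
  set u : ℕ → X := fun j => ∑ q ∈ Finset.Ico (L (e j)) (K (e j)), x q with hu
  have hTu : ∀ j, T (u j) = (∑ i ∈ Finset.range (K (e j)), T (x i)) -
      (∑ i ∈ Finset.range (L (e j)), T (x i)) := by
    intro j
    rw [hu, map_sum]
    exact Finset.sum_Ico_eq_sub _ (hLltK j).le
  refine ⟨u, fun j => by rw [hTu]; exact h3 (e j), ?_⟩
  have hchain : ∀ j N, j < N → K (e j) ≤ L (e N) := by
    intro j N hjN
    calc K (e j) = e (j+1) := (heS j).symm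
      _ ≤ e N := hemono'.monotone hjN
      _ ≤ L (e N) := hLK N
  have key : ∀ g : X →L[ℝ] ℝ, ∀ N : ℕ,
      ∑ j ∈ Finset.range N, |g (u j)| ≤ ∑ q ∈ Finset.range (L (e N)), |g (x q)| := by
    intro g N
    induction N with
    | zero =>
      simp only [Finset.range_zero, Finset.sum_empty]
      positivity
    | succ N ih =>
      rw [Finset.sum_range_succ]
      have hgu : |g (u N)| ≤ ∑ q ∈ Finset.Ico (L (e N)) (K (e N)), |g (x q)| := by
        rw [hu, map_sum]
        exact Finset.abs_sum_le_sum_abs _ _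
      have hsplit : (∑ q ∈ Finset.range (L (e N)), |g (x q)|) +
          (∑ q ∈ Finset.Ico (L (e N)) (K (e N)), |g (x q)|) =
          ∑ q ∈ Finset.range (K (e N)), |g (x q)| := by
        rw [Finset.range_eq_Ico, Finset.range_eq_Ico]
        exact Finset.sum_Ico_consecutive (fun q => |g (x q)|) (Nat.zero_le _) (hLltK N).le
      have hsub : (∑ q ∈ Finset.range (K (e N)), |g (x q)|) ≤
          ∑ q ∈ Finset.range (L (e (N+1))), |g (x q)| := by
        apply Finset.sum_le_sum_of_subset_of_nonneg
        · exact Finset.range_subset_range.2 (hchain N (N+1) (Nat.lt_succ_self N))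
        · intros; exact abs_nonneg _
      calc (∑ j ∈ Finset.range N, |g (u j)|) + |g (u N)|
          ≤ (∑ q ∈ Finset.range (L (e N)), |g (x q)|) +
            (∑ q ∈ Finset.Ico (L (e N)) (K (e N)), |g (x q)|) := by
            gcongr
        _ = ∑ q ∈ Finset.range (K (e N)), |g (x q)| := hsplit
        _ ≤ _ := hsub
  have key1 : ∀ g : X →L[ℝ] ℝ, ‖g‖ ≤ 1 → ∀ N : ℕ, ∑ j ∈ Finset.range N, |g (u j)| ≤ 1 := by
    intro g hg N
    calc ∑ j ∈ Finset.range N, |g (u j)| ≤ ∑ q ∈ Finset.range (L (e N)), |g (x q)| := key g N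
      _ ≤ 1 := by
          have := (by unfold UnitWUC at hx; exact hx : ∀ f : StrongDual ℝ X, ‖f‖ ≤ 1 → ∀ N : ℕ, ∑ i ∈ Finset.range N, ‖f (x i)‖ ≤ 1) g hg (L (e N))
          simpa [Real.norm_eq_abs] using this
  have key2 : ∀ g : X →L[ℝ] ℝ, ∀ N : ℕ, ∑ j ∈ Finset.range N, |g (u j)| ≤ ‖g‖ := by
    intro g N
    by_cases hg0 : g = 0
    · simp [hg0]
    · have hgpos : 0 < ‖g‖ := norm_pos_iff.2 hg0
      set g' : X →L[ℝ] ℝ := ‖g‖⁻¹ • g with hg'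
      have hg'norm : ‖g'‖ ≤ 1 := by
        calc ‖g'‖ ≤ ‖(‖g‖⁻¹)‖ * ‖g‖ := ContinuousLinearMap.opNorm_smul_le _ _
          _ = 1 := by
            rw [Real.norm_eq_abs, abs_inv, abs_of_pos hgpos, inv_mul_cancel₀ hgpos.ne']
      have := key1 g' hg'norm N
      have heq : ∀ j, |g' (u j)| = ‖g‖⁻¹ * |g (u j)| := by
        intro j
        rw [hg']
        simp [Real.norm_eq_abs, abs_mul, abs_inv, abs_of_pos hgpos]
      rw [Finset.sum_congr rfl (fun j _ => heq j), ← Finset.mul_sum] at this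
      calc ∑ j ∈ Finset.range N, |g (u j)| = ‖g‖ * (‖g‖⁻¹ * ∑ j ∈ Finset.range N, |g (u j)|) := by
            field_simp
        _ ≤ ‖g‖ * 1 := mul_le_mul_of_nonneg_left this hgpos.le
        _ = ‖g‖ := mul_one _
  intro g F
  obtain ⟨N, hN⟩ := F.exists_nat_subset_range
  calc ∑ j ∈ F, |g (u j)| ≤ ∑ j ∈ Finset.range N, |g (u j)| := by
        apply Finset.sum_le_sum_of_subset_of_nonneg hN
        intros; exact abs_nonneg _
    _ ≤ ‖g‖ := key2 g N

lemma aux5_subseq_hw (u : ℕ → X)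
    (hw : ∀ g : X →L[ℝ] ℝ, ∀ F : Finset ℕ, ∑ j ∈ F, |g (u j)| ≤ ‖g‖)
    (phi : ℕ → ℕ) (hphi : Function.Injective phi) :
    ∀ g : X →L[ℝ] ℝ, ∀ F : Finset ℕ, ∑ j ∈ F, |g (u (phi j))| ≤ ‖g‖ := by
  intro g F
  classical
  have h : ∑ j ∈ F.image phi, |g (u j)| = ∑ j ∈ F, |g (u (phi j))| :=
    Finset.sum_image (fun a _ b _ hab => hphi hab)
  rw [← h]
  exact hw g _

end ExtractBlocks

lemma aux5_exists_seq_of_rec (P : (ℕ → ℕ) → ℕ → ℕ → Prop)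
    (hP : ∀ prev m, ∃ j, P prev m j)
    (hcongr : ∀ prev prev' m j, (∀ i, i < m → prev i = prev' i) → P prev m j → P prev' m j) :
    ∃ phi : ℕ → ℕ, ∀ m, P phi m (phi m) := by
  classical
  let phi : ℕ → ℕ := fun m => Nat.strongRec (motive := fun _ => ℕ)
    (fun m ih => (hP (fun i => if h : i < m then ih i h else 0) m).choose) m
  have hbeta : ∀ m, phi m = (hP (fun i => if h : i < m then phi i else 0) m).choose := by
    intro m
    exact Nat.strongRec_eq _ m
  refine ⟨phi, fun m => ?_⟩
  have hspec := (hP (fun i => if h : i < m then phi i else 0) m).choose_spec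
  rw [← hbeta m] at hspec
  exact hcongr _ _ _ _ (fun i hi => by simp [hi]) hspec

section Selection
variable {Y : Type*} [NormedAddCommGroup Y] [NormedSpace ℝ Y]

lemma aux5_selection (v : ℕ → Y) (δ'' ε' : ℝ) (hδ : 0 < δ'') (hε' : 0 < ε')
    (hv : ∀ j, δ'' < ‖v j‖)
    (hsum : ∀ h : Y →L[ℝ] ℝ, Summable fun q => |h (v q)|) :
    ∃ phi : ℕ → ℕ, StrictMono phi ∧ ∃ G : ℕ → (Y →L[ℝ] ℝ),
      (∀ m, ‖G m‖ ≤ 2) ∧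
      (∀ m, δ'' - ε' ≤ G m (v (phi m))) ∧
      (∀ m (F : Finset ℕ), m ∉ F → ∑ i ∈ F, |G m (v (phi i))| ≤ 5 * ε') := by
  classical
  have hvne : ∀ j, v j ≠ 0 := by
    intro j h
    have := hv j
    rw [h, norm_zero] at this
    linarith
  choose f hf1 hf2 using fun j => exists_dual_vector ℝ (v j) (norm_ne_zero_iff.2 (hvne j))
  have hf2' : ∀ j, f j (v j) = ‖v j‖ := by
    intro j; simpa using hf2 j
  set K : Set (WeakDual ℝ Y) := WeakDual.toStrongDual ⁻¹' closedBall 0 1 with hKdef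
  have hK : IsCompact K := WeakDual.isCompact_closedBall 0 1
  set Φ : ℕ → WeakDual ℝ Y := fun j => StrongDual.toWeakDual (f j) with hΦ
  have hmem : ∀ j, Φ j ∈ K := by
    intro j
    simp only [hKdef, Set.mem_preimage, mem_closedBall_zero_iff]
    exact le_of_eq (hf1 j)
  have hle : Filter.map Φ atTop ≤ Filter.principal K :=
    Filter.le_principal_iff.2 (Filter.mem_map.2 (Filter.univ_mem' hmem))
  obtain ⟨F', hF'K, hclus⟩ := hK.exists_clusterPt hle
  set F₀ : Y →L[ℝ] ℝ := WeakDual.toStrongDual F' with hF₀def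
  have hF₀ : ‖F₀‖ ≤ 1 := by
    have := hF'K
    simp only [hKdef, Set.mem_preimage, mem_closedBall_zero_iff] at this
    exact this
  have hF₀v : ∀ q, F₀ (v q) = F' (v q) := fun q => rfl
  have hΦv : ∀ j q, Φ j (v q) = f j (v q) := fun j q => rfl
  have hfreq : ∀ (s : Finset ℕ) (η : ℝ), 0 < η →
      ∃ᶠ j in atTop, ∀ i ∈ s, |f j (v i) - F₀ (v i)| < η := by
    intro s η hη
    have hU : (⋂ i ∈ s, (fun g : WeakDual ℝ Y => g (v i)) ⁻¹' Metric.ball (F' (v i)) η)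
        ∈ 𝓝 F' := by
      refine (Filter.biInter_finset_mem s).2 fun i _ => ?_
      exact (WeakDual.eval_continuous (v i)).continuousAt.preimage_mem_nhds
        (Metric.isOpen_ball.mem_nhds (Metric.mem_ball_self hη))
    have hmc : MapClusterPt F' atTop Φ := hclus
    have := (mapClusterPt_iff_frequently.1 hmc) _ hU
    refine this.mono fun j hj => ?_
    intro i hi
    have hji := Set.mem_iInter₂.1 hj i hi
    simp only [Set.mem_preimage, Metric.mem_ball, Real.dist_eq] at hji
    rw [hΦv j i] at hji
    rw [hF₀v]
    exact hji
  have htend : ∀ h : Y →L[ℝ] ℝ, Tendsto (fun q => |h (v q)|) atTop (𝓝 0) :=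
    fun h => (hsum h).tendsto_atTop_zero
  have hev : ∀ (h : Y →L[ℝ] ℝ) (η : ℝ), 0 < η → ∀ᶠ j in atTop, |h (v j)| ≤ η := by
    intro h η hη
    exact ((htend h).eventually_lt_const hη).mono fun j hj => hj.le
  set P : (ℕ → ℕ) → ℕ → ℕ → Prop := fun prev m j =>
    (∀ i, i < m → |f j (v (prev i)) - F₀ (v (prev i))| ≤ ε' * (1/2)^m) ∧
    |F₀ (v j)| ≤ ε' * (1/2)^m ∧
    (∀ p, p < m → |f (prev p) (v j)| ≤ ε' * (1/2)^m) ∧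
    (∀ p, p < m → prev p < j) with hPdef
  have hP : ∀ prev m, ∃ j, P prev m j := by
    intro prev m
    have hη : 0 < ε' * (1/2)^m := by positivity
    have hfr := hfreq ((Finset.range m).image prev) _ hη
    have hev1 : ∀ᶠ j in atTop, |F₀ (v j)| ≤ ε' * (1/2)^m := hev F₀ _ hη
    have hev2 : ∀ᶠ j in atTop, ∀ p ∈ Finset.range m, |f (prev p) (v j)| ≤ ε' * (1/2)^m :=
      (Filter.eventually_all_finset _).2 fun p _ => hev (f (prev p)) _ hη
    have hev3 : ∀ᶠ j in atTop, ∀ p ∈ Finset.range m, prev p < j :=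
      (Filter.eventually_all_finset _).2 fun p _ => Filter.eventually_gt_atTop _
    obtain ⟨j, hj1, hj2, hj3, hj4⟩ := (hfr.and_eventually (hev1.and (hev2.and hev3))).exists
    refine ⟨j, ?_, hj2, ?_, ?_⟩
    · intro i hi
      exact (hj1 (prev i) (Finset.mem_image_of_mem prev (Finset.mem_range.2 hi))).le
    · intro p hp
      exact hj3 p (Finset.mem_range.2 hp)
    · intro p hp
      exact hj4 p (Finset.mem_range.2 hp)
  have hcongr : ∀ prev prev' m j, (∀ i, i < m → prev i = prev' i) → P prev m j → P prev' m j := by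
    intro prev prev' m j hagree ⟨h1, h2, h3, h4⟩
    refine ⟨fun i hi => ?_, h2, fun p hp => ?_, fun p hp => ?_⟩
    · rw [← hagree i hi]; exact h1 i hi
    · rw [← hagree p hp]; exact h3 p hp
    · rw [← hagree p hp]; exact h4 p hp
  obtain ⟨phi, hphi⟩ := aux5_exists_seq_of_rec P hP hcongr
  have hmono : StrictMono phi := by
    apply strictMono_nat_of_lt_succ
    intro m
    exact (hphi (m+1)).2.2.2 m (Nat.lt_succ_self m)
  refine ⟨phi, hmono, fun m => f (phi m) - F₀, ?_, ?_, ?_⟩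
  · intro m
    calc ‖f (phi m) - F₀‖ ≤ ‖f (phi m)‖ + ‖F₀‖ := norm_sub_le _ _
      _ ≤ 1 + 1 := by rw [hf1]; gcongr
      _ = 2 := by norm_num
  · intro m
    have h2 := (hphi m).2.1
    have hhalf : ε' * (1/2)^m ≤ ε' := by
      calc ε' * (1/2)^m ≤ ε' * 1 := by
            apply mul_le_mul_of_nonneg_left _ hε'.le
            apply pow_le_one₀ <;> norm_num
        _ = ε' := mul_one _
    have heval : (f (phi m) - F₀) (v (phi m)) = ‖v (phi m)‖ - F₀ (v (phi m)) := by
      simp [hf2' (phi m)]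
    rw [heval]
    have habs : F₀ (v (phi m)) ≤ ε' * (1/2)^m := (abs_le.1 h2).2
    have := hv (phi m)
    linarith
  · intro m F hmF
    have hsplit := Finset.sum_filter_add_sum_filter_not F (· < m)
      (fun i => |(f (phi m) - F₀) (v (phi i))|)
    rw [← hsplit]
    have hpart1 : ∑ i ∈ F.filter (· < m), |(f (phi m) - F₀) (v (phi i))| ≤ ε' := by
      have hcard : (F.filter (· < m)).card ≤ m := by
        have hss : F.filter (· < m) ⊆ Finset.range m := by
          intro i hi
          exact Finset.mem_range.2 (Finset.mem_filter.1 hi).2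
        calc (F.filter (· < m)).card ≤ (Finset.range m).card := Finset.card_le_card hss
          _ = m := Finset.card_range m
      have hbound : ∀ i ∈ F.filter (· < m), |(f (phi m) - F₀) (v (phi i))| ≤ ε' * (1/2)^m := by
        intro i hi
        have him := (Finset.mem_filter.1 hi).2
        have := (hphi m).1 i him
        simpa using this
      calc ∑ i ∈ F.filter (· < m), |(f (phi m) - F₀) (v (phi i))|
          ≤ ∑ _i ∈ F.filter (· < m), ε' * (1/2)^m := Finset.sum_le_sum hbound
        _ = (F.filter (· < m)).card * (ε' * (1/2)^m) := by rw [Finset.sum_const, nsmul_eq_mul]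
        _ ≤ m * (ε' * (1/2)^m) := by
            apply mul_le_mul_of_nonneg_right _ (by positivity)
            exact_mod_cast hcard
        _ ≤ ε' := by
            have h2m : (m : ℝ) ≤ 2^m := by exact_mod_cast (Nat.lt_two_pow_self (n := m)).le
            have hm1 : (m : ℝ) * (1/2)^m ≤ 1 := by
              rw [one_div, inv_pow]
              rw [mul_inv_le_iff₀ (by positivity)]
              simpa using h2m
            calc (m:ℝ) * (ε' * (1/2)^m) = ε' * ((m:ℝ) * (1/2)^m) := by ring
              _ ≤ ε' * 1 := mul_le_mul_of_nonneg_left hm1 hε'.le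
              _ = ε' := mul_one _
    have hpart2 : ∑ i ∈ F.filter (¬ · < m), |(f (phi m) - F₀) (v (phi i))| ≤ 4 * ε' := by
      have hbound : ∀ i ∈ F.filter (¬ · < m), |(f (phi m) - F₀) (v (phi i))|
          ≤ 2 * ε' * (1/2)^i := by
        intro i hi
        obtain ⟨hiF, hnlt⟩ := Finset.mem_filter.1 hi
        have hmi : m < i := by
          rcases Nat.lt_or_ge i m with h | h
          · exact absurd h hnlt
          · rcases Nat.eq_or_lt_of_le h with h' | h'
            · exact absurd h'.symm (by rintro rfl; exact hmF hiF)
            · exact h'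
        have hc2 := (hphi i).2.1
        have hc3 := (hphi i).2.2.1 m hmi
        calc |(f (phi m) - F₀) (v (phi i))|
            ≤ |f (phi m) (v (phi i))| + |F₀ (v (phi i))| := by
              simp only [ContinuousLinearMap.sub_apply]
              exact abs_sub _ _
          _ ≤ ε' * (1/2)^i + ε' * (1/2)^i := add_le_add hc3 hc2
          _ = 2 * ε' * (1/2)^i := by ring
      obtain ⟨N, hN⟩ := (F.filter (¬ · < m)).exists_nat_subset_range
      calc ∑ i ∈ F.filter (¬ · < m), |(f (phi m) - F₀) (v (phi i))|
          ≤ ∑ i ∈ F.filter (¬ · < m), 2 * ε' * (1/2)^i := Finset.sum_le_sum hbound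
        _ ≤ ∑ i ∈ Finset.range N, 2 * ε' * (1/2)^i := by
            apply Finset.sum_le_sum_of_subset_of_nonneg hN
            intros; positivity
        _ = 2 * ε' * ∑ i ∈ Finset.range N, (1/2)^i := by rw [Finset.mul_sum]
        _ ≤ 2 * ε' * 2 := by
            apply mul_le_mul_of_nonneg_left (sum_geometric_two_le N) (by positivity)
        _ = 4 * ε' := by ring
    linarith
end Selection

end Aux5

/-- if `0 < δ < uc(T)`, then `T` fixes a copy of `c₀` in a quantitatively
nice way: `(T|_{X₀})⁻¹ = U ∘ V` with `‖U‖ ≤ 1` and `‖V‖ ≤ 2/δ`. -/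
theorem statement5 {X Y : Type*} [NormedAddCommGroup X] [NormedSpace ℝ X] [CompleteSpace X]
    [NormedAddCommGroup Y] [NormedSpace ℝ Y] [CompleteSpace Y] (T : X →L[ℝ] Y)
    (δ : ℝ) (hδ0 : 0 < δ) (hδ : δ < ucQ ℝ T) :
    ∃ (X₀ : Submodule ℝ X) (U : C₀(ℕ, ℝ) ≃L[ℝ] X₀)
      (V : (X₀.map (T : X →ₗ[ℝ] Y)) ≃L[ℝ] C₀(ℕ, ℝ)),
      IsClosed (X₀ : Set X) ∧
      (∀ x : X₀, (U (V ⟨T x, Submodule.mem_map_of_mem x.2⟩) : X) = (x : X)) ∧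
      ‖(U : C₀(ℕ, ℝ) →L[ℝ] X₀)‖ ≤ 1 ∧
      ‖(V : (X₀.map (T : X →ₗ[ℝ] Y)) →L[ℝ] C₀(ℕ, ℝ))‖ ≤ 2 / δ := by
  classical
  set δ'' : ℝ := (δ + ucQ ℝ T)/2 with hδ''def
  have hδ''1 : δ < δ'' := by rw [hδ''def]; linarith
  have hδ''2 : δ'' < ucQ ℝ T := by rw [hδ''def]; linarith
  have hδ''0 : 0 < δ'' := lt_trans hδ0 hδ''1
  set ε' : ℝ := (δ'' - δ)/6 with hε'def
  have hε' : 0 < ε' := by rw [hε'def]; linarith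
  obtain ⟨x, hx, hblocks⟩ := aux5_extract_blocks T δ'' hδ''0 hδ''2
  obtain ⟨u, hu, hwu⟩ := aux5_blocks_exist T δ'' x hx hblocks
  have hsumY : ∀ h : Y →L[ℝ] ℝ, Summable fun q => |h (T (u q))| := by
    intro h
    apply summable_of_sum_range_le (c := ‖h.comp T‖) (fun q => abs_nonneg _)
    intro N
    have := hwu (h.comp T) (Finset.range N)
    simpa using this
  obtain ⟨phi, hmono, G, hG2, hGval, hGcross⟩ :=
    aux5_selection (fun q => T (u q)) δ'' ε' hδ''0 hε' hu hsumY
  set w : ℕ → X := fun i => u (phi i) with hwdef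
  have hww : ∀ g : X →L[ℝ] ℝ, ∀ F : Finset ℕ, ∑ j ∈ F, |g (w j)| ≤ ‖g‖ :=
    aux5_subseq_hw u hwu phi hmono.injective
  have hSum : ∀ t : C₀(ℕ, ℝ), Summable fun i => t i • w i := fun t => aux5_summable w hww t
  -- the operator U
  set Ulin : C₀(ℕ, ℝ) →ₗ[ℝ] X :=
    { toFun := fun t => ∑' i, t i • w i
      map_add' := by
        intro t s
        calc (∑' i, ((t + s) i) • w i) = ∑' i, (t i • w i + s i • w i) := by
              apply tsum_congr; intro i
              simp [add_smul]
          _ = (∑' i, t i • w i) + ∑' i, s i • w i := Summable.tsum_add (hSum t) (hSum s)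
      map_smul' := by
        intro c t
        calc (∑' i, ((c • t) i) • w i) = ∑' i, c • (t i • w i) := by
              apply tsum_congr; intro i
              simp [smul_smul]
          _ = c • ∑' i, t i • w i := Summable.tsum_const_smul c (hSum t) } with hUlindef
  have hUbound : ∀ t, ‖Ulin t‖ ≤ 1 * ‖t‖ := by
    intro t
    rw [one_mul]
    exact aux5_tsum_norm_le w hww t
  set U : C₀(ℕ, ℝ) →L[ℝ] X := Ulin.mkContinuous 1 hUbound with hUdef
  have hUapp : ∀ t, U t = ∑' i, t i • w i := fun t => rfl
  have hUnormpt : ∀ t, ‖U t‖ ≤ ‖t‖ := by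
    intro t
    rw [hUapp]
    exact aux5_tsum_norm_le w hww t
  set A : C₀(ℕ, ℝ) →L[ℝ] Y := T.comp U with hAdef
  have hAapp : ∀ t, A t = T (U t) := fun t => rfl
  -- the key lower estimate
  have hAlow : ∀ t : C₀(ℕ, ℝ), δ * ‖t‖ ≤ 2 * ‖A t‖ := by
    intro t
    by_cases h0 : t = 0
    · simp [h0]
    have htpos : 0 < ‖t‖ := norm_pos_iff.2 h0
    obtain ⟨m, hm⟩ := aux5_exists_norm_eq t
    have hhs : HasSum (fun i => t i • w i) (U t) := (hSum t).hasSum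
    have hhsY : HasSum (fun i => t i • T (w i)) (A t) := by
      have heqf : (fun i => t i • T (w i)) = fun i => T (t i • w i) := by
        ext i; rw [map_smul]
      rw [heqf]
      exact hhs.mapL T
    have htd : Tendsto (fun N => ∑ i ∈ Finset.range N, t i • T (w i)) atTop (𝓝 (A t)) :=
      hhsY.tendsto_sum_nat
    have htdG : Tendsto (fun N => |G m (∑ i ∈ Finset.range N, t i • T (w i))|) atTop
        (𝓝 (|G m (A t)|)) := (((G m).continuous.tendsto _).comp htd).abs
    have hev : ∀ᶠ N in atTop, δ * ‖t‖ ≤ |G m (∑ i ∈ Finset.range N, t i • T (w i))| := by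
      filter_upwards [eventually_ge_atTop (m+1)] with N hN
      have hmN : m ∈ Finset.range N := Finset.mem_range.2 (lt_of_lt_of_le (Nat.lt_succ_self m) hN)
      have hsum_split : G m (∑ i ∈ Finset.range N, t i • T (w i)) =
          t m * G m (T (w m)) + ∑ i ∈ (Finset.range N).erase m, t i * G m (T (w i)) := by
        rw [map_sum, ← Finset.add_sum_erase _ _ hmN]
        congr 1
        · rw [map_smul]; rfl
        · apply Finset.sum_congr rfl
          intro i _
          rw [map_smul]; rfl
      have hrest : |∑ i ∈ (Finset.range N).erase m, t i * G m (T (w i))| ≤ ‖t‖ * (5 * ε') := by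
        calc |∑ i ∈ (Finset.range N).erase m, t i * G m (T (w i))|
            ≤ ∑ i ∈ (Finset.range N).erase m, |t i * G m (T (w i))| :=
              Finset.abs_sum_le_sum_abs _ _
          _ = ∑ i ∈ (Finset.range N).erase m, |t i| * |G m (T (w i))| := by
              apply Finset.sum_congr rfl; intro i _; exact abs_mul _ _
          _ ≤ ∑ i ∈ (Finset.range N).erase m, ‖t‖ * |G m (T (w i))| := by
              apply Finset.sum_le_sum
              intro i _
              exact mul_le_mul_of_nonneg_right (aux5_abs_le_norm t i) (abs_nonneg _)
          _ = ‖t‖ * ∑ i ∈ (Finset.range N).erase m, |G m (T (w i))| := by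
              rw [Finset.mul_sum]
          _ ≤ ‖t‖ * (5 * ε') := by
              apply mul_le_mul_of_nonneg_left _ (norm_nonneg t)
              exact hGcross m _ (Finset.notMem_erase m _)
      have hmain : ‖t‖ * (δ'' - ε') ≤ |t m * G m (T (w m))| := by
        have hval : δ'' - ε' ≤ |G m (T (w m))| := le_trans (hGval m) (le_abs_self _)
        calc ‖t‖ * (δ'' - ε') ≤ ‖t‖ * |G m (T (w m))| :=
              mul_le_mul_of_nonneg_left hval (norm_nonneg t)
          _ = |t m| * |G m (T (w m))| := by rw [hm]
          _ = |t m * G m (T (w m))| := (abs_mul _ _).symm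
      have habs2 : |t m * G m (T (w m))| ≤
          |G m (∑ i ∈ Finset.range N, t i • T (w i))| +
          |∑ i ∈ (Finset.range N).erase m, t i * G m (T (w i))| := by
        rw [hsum_split]
        calc |t m * G m (T (w m))|
            = |(t m * G m (T (w m)) + ∑ i ∈ (Finset.range N).erase m, t i * G m (T (w i)))
                + (-(∑ i ∈ (Finset.range N).erase m, t i * G m (T (w i))))| := by
              congr 1; ring
          _ ≤ |t m * G m (T (w m)) + ∑ i ∈ (Finset.range N).erase m, t i * G m (T (w i))|
              + |-(∑ i ∈ (Finset.range N).erase m, t i * G m (T (w i)))| := abs_add_le _ _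
          _ = _ := by rw [abs_neg]
      have hc : δ'' - 6*ε' = δ := by rw [hε'def]; ring
      have hfin : δ * ‖t‖ = ‖t‖ * (δ'' - ε') - ‖t‖ * (5 * ε') := by
        rw [← hc]; ring
      linarith
    have hlow := ge_of_tendsto htdG hev
    have hup : |G m (A t)| ≤ 2 * ‖A t‖ := by
      calc |G m (A t)| = ‖G m (A t)‖ := (Real.norm_eq_abs _).symm
        _ ≤ ‖G m‖ * ‖A t‖ := (G m).le_opNorm _
        _ ≤ 2 * ‖A t‖ := mul_le_mul_of_nonneg_right (hG2 m) (norm_nonneg _)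
    linarith
  have hAlow' : ∀ t : C₀(ℕ, ℝ), ‖t‖ ≤ 2/δ * ‖A t‖ := by
    intro t
    have h1 := hAlow t
    rw [div_mul_eq_mul_div, le_div_iff₀ hδ0, mul_comm]
    linarith
  -- injectivity
  have hAinj : Function.Injective ⇑A := by
    intro a b hab
    have h1 : A (a - b) = 0 := by rw [map_sub, hab, sub_self]
    have h2 := hAlow' (a - b)
    rw [h1, norm_zero, mul_zero] at h2
    have h3 : a - b = 0 := norm_le_zero_iff.1 h2
    exact sub_eq_zero.1 h3
  have hUinj : Function.Injective ⇑U := by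
    intro a b hab
    apply hAinj
    rw [hAapp, hAapp, hab]
  -- bound below ⇒ closed ranges
  have hUlow : ∀ t : C₀(ℕ, ℝ), ‖t‖ ≤ (2*‖T‖/δ) * ‖U t‖ := by
    intro t
    have h1 := hAlow' t
    have h2 : ‖A t‖ ≤ ‖T‖ * ‖U t‖ := by
      rw [hAapp]
      exact T.le_opNorm _
    calc ‖t‖ ≤ 2/δ * ‖A t‖ := h1
      _ ≤ 2/δ * (‖T‖ * ‖U t‖) := by
          apply mul_le_mul_of_nonneg_left h2 (by positivity)
      _ = (2*‖T‖/δ) * ‖U t‖ := by ring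
  have hUanti : AntilipschitzWith (Real.toNNReal (2*‖T‖/δ)) U := by
    apply ContinuousLinearMap.antilipschitz_of_bound
    intro t
    rw [Real.coe_toNNReal _ (by positivity)]
    exact hUlow t
  have hAanti : AntilipschitzWith (Real.toNNReal (2/δ)) A := by
    apply ContinuousLinearMap.antilipschitz_of_bound
    intro t
    rw [Real.coe_toNNReal _ (by positivity)]
    exact hAlow' t
  set X₀ : Submodule ℝ X := LinearMap.range (U : C₀(ℕ, ℝ) →ₗ[ℝ] X) with hX₀def
  have hX₀set : (X₀ : Set X) = Set.range ⇑U := by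
    ext z
    simp [hX₀def]
  have hX₀closed : IsClosed (X₀ : Set X) := by
    rw [hX₀set]
    exact hUanti.isClosed_range U.uniformContinuous
  haveI : CompleteSpace X₀ := hX₀closed.completeSpace_coe
  set X₁ : Submodule ℝ Y := X₀.map (T : X →ₗ[ℝ] Y) with hX₁def
  have hmemA : ∀ t, A t ∈ X₁ := by
    intro t
    rw [hX₁def]
    exact Submodule.mem_map_of_mem (LinearMap.mem_range_self (U : C₀(ℕ, ℝ) →ₗ[ℝ] X) t)
  have hX₁set : (X₁ : Set Y) = Set.range ⇑A := by
    ext z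
    constructor
    · intro hz
      have hz' : z ∈ X₁ := hz
      rw [hX₁def, Submodule.mem_map] at hz'
      obtain ⟨xx, hxx, rfl⟩ := hz'
      rw [hX₀def, LinearMap.mem_range] at hxx
      obtain ⟨t, rfl⟩ := hxx
      exact ⟨t, rfl⟩
    · rintro ⟨t, rfl⟩
      exact hmemA t
  have hX₁closed : IsClosed (X₁ : Set Y) := by
    rw [hX₁set]
    exact hAanti.isClosed_range A.uniformContinuous
  haveI : CompleteSpace X₁ := hX₁closed.completeSpace_coe
  -- the equivalences
  set Ucor : C₀(ℕ, ℝ) →L[ℝ] X₀ := U.codRestrict X₀ (fun t => LinearMap.mem_range_self (U : C₀(ℕ, ℝ) →ₗ[ℝ] X) t)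
    with hUcordef
  have hUcorapp : ∀ t, (Ucor t : X) = U t := fun t => rfl
  have hUker : LinearMap.ker (Ucor : C₀(ℕ, ℝ) →ₗ[ℝ] X₀) = ⊥ :=
    LinearMap.ker_eq_bot_of_injective (fun a b hab => hUinj (congrArg Subtype.val hab))
  have hUrange : LinearMap.range (Ucor : C₀(ℕ, ℝ) →ₗ[ℝ] X₀) = ⊤ := by
    apply LinearMap.range_eq_top_of_surjective
    rintro ⟨z, hz⟩
    obtain ⟨t, ht⟩ := LinearMap.mem_range.1 hz
    exact ⟨t, Subtype.ext (by exact ht)⟩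
  set U' : C₀(ℕ, ℝ) ≃L[ℝ] X₀ := ContinuousLinearEquiv.ofBijective Ucor hUker hUrange with hU'def
  set Acor : C₀(ℕ, ℝ) →L[ℝ] X₁ := A.codRestrict X₁ hmemA with hAcordef
  have hAcorapp : ∀ t, (Acor t : Y) = A t := fun t => rfl
  have hAker : LinearMap.ker (Acor : C₀(ℕ, ℝ) →ₗ[ℝ] X₁) = ⊥ :=
    LinearMap.ker_eq_bot_of_injective (fun a b hab => hAinj (congrArg Subtype.val hab))
  have hArange : LinearMap.range (Acor : C₀(ℕ, ℝ) →ₗ[ℝ] X₁) = ⊤ := by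
    apply LinearMap.range_eq_top_of_surjective
    rintro ⟨z, hz⟩
    have hz' : z ∈ (X₁ : Set Y) := hz
    rw [hX₁set] at hz'
    obtain ⟨t, ht⟩ := hz'
    exact ⟨t, Subtype.ext (by exact ht)⟩
  set A' : C₀(ℕ, ℝ) ≃L[ℝ] X₁ := ContinuousLinearEquiv.ofBijective Acor hAker hArange with hA'def
  refine ⟨X₀, U', A'.symm, hX₀closed, ?_, ?_, ?_⟩
  · -- compatibility
    intro xx
    obtain ⟨t, ht⟩ := LinearMap.mem_range.1 xx.2
    have h1 : A' t = ⟨T ↑xx, Submodule.mem_map_of_mem xx.2⟩ := by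
      apply Subtype.ext
      show (Acor t : Y) = T ↑xx
      rw [hAcorapp, hAapp]; exact congrArg T ht
    have h2 : A'.symm ⟨T ↑xx, Submodule.mem_map_of_mem xx.2⟩ = t := by
      rw [← h1]
      exact A'.symm_apply_apply t
    rw [h2]
    show (Ucor t : X) = ↑xx
    rw [hUcorapp]
    exact ht
  · -- norm of U'
    apply ContinuousLinearMap.opNorm_le_bound _ zero_le_one
    intro t
    rw [one_mul]
    show ‖U' t‖ ≤ ‖t‖
    have hcoe : ‖U' t‖ = ‖(U' t : X)‖ := rfl
    rw [hcoe]
    show ‖(Ucor t : X)‖ ≤ ‖t‖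
    rw [hUcorapp]
    exact hUnormpt t
  · -- norm of V
    apply ContinuousLinearMap.opNorm_le_bound _ (by positivity)
    intro y
    show ‖A'.symm y‖ ≤ 2/δ * ‖y‖
    have h1 : A' (A'.symm y) = y := A'.apply_symm_apply y
    have h2 : A (A'.symm y) = (y : Y) := by
      rw [← hAcorapp]
      exact congrArg Subtype.val h1
    have h3 := hAlow' (A'.symm y)
    rw [h2] at h3
    have h4 : ‖y‖ = ‖(y : Y)‖ := rfl
    rw [h4]
    exact h3
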